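/- arXiv:2103.08062 — 2 statements merged into one kernel-verified Lean document; each statement's English description precedes it below -/
import Mathlib

section
/- With c(i) = ((q^{mi} - 1) q^r q^{2i-2} a^2 + q^r [m]_q [i]_{q^m} q^{i-1} a) q^{m(i-1)+r}, the double product Π_{i=0}^{n-1} Π_{j=1}^{i} c(j) equals q^{2r·C(n,2) + (m+1)·C(n,3)} a^{C(n,2)} Π_{i=0}^{n-1} Π_{j=1}^{i} [mj]_q (1 - q^{j-1}(1-q) a). -/
/-- The q-integer `[t]_q = 1 + q + ... + q^(t-1)`. -/
def qint {K : Type*} [CommRing K] (q : K) (t : ℕ) : K :=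
  ∑ i ∈ Finset.range t, q ^ i

lemma qint_add {K : Type*} [CommRing K] (q : K) (s t : ℕ) :
    qint q (s + t) = qint q s + q ^ s * qint q t := by
  simp [qint, Finset.sum_range_add, Finset.mul_sum, pow_add]

lemma qint_mul {K : Type*} [CommRing K] (q : K) (m j : ℕ) :
    qint q (m * j) = qint q m * qint (q ^ m) j := by
  induction j with
  | zero => simp [qint]
  | succ k ih =>
    have : m * (k + 1) = m * k + m := by ring
    rw [this, qint_add, ih]
    have h2 : qint (q ^ m) (k + 1) = qint (q ^ m) k + (q ^ m) ^ k := by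
      simp [qint, Finset.sum_range_succ]
    rw [h2, ← pow_mul]
    ring

lemma qint_geom {K : Type*} [CommRing K] (q : K) (t : ℕ) :
    qint q t * (q - 1) = q ^ t - 1 := by
  simpa [qint] using geom_sum_mul q t

lemma key_term {K : Type*} [CommRing K] (q a : K) (m r k : ℕ) :
    ((q ^ (m * (k + 1)) - 1) * q ^ r * q ^ (2 * (k + 1) - 2) * a ^ 2
      + q ^ r * qint q m * qint (q ^ m) (k + 1) * q ^ (k + 1 - 1) * a) * q ^ (m * ((k + 1) - 1) + r)
    = q ^ ((m + 1) * k + 2 * r) * a *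
        (qint q (m * (k + 1)) * (1 - q ^ (k + 1 - 1) * (1 - q) * a)) := by
  have h1 : q ^ (m * (k + 1)) - 1 = qint q (m * (k + 1)) * (q - 1) := (qint_geom q _).symm
  have h2 : qint q m * qint (q ^ m) (k + 1) = qint q (m * (k + 1)) := (qint_mul q m (k + 1)).symm
  simp only [Nat.add_sub_cancel, show 2 * (k + 1) - 2 = 2 * k from by omega, h1]
  rw [mul_assoc (q ^ r) (qint q m), h2]
  rw [show (m + 1) * k + 2 * r = m * k + r + k + r from by ring]
  rw [two_mul, pow_add, pow_add, pow_add, pow_add]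
  ring

lemma inner_prod {K : Type*} [CommRing K] (q a : K) (m r i : ℕ) :
    (∏ j ∈ Finset.Icc 1 i,
        ((q ^ (m * j) - 1) * q ^ r * q ^ (2 * j - 2) * a ^ 2
          + q ^ r * qint q m * qint (q ^ m) j * q ^ (j - 1) * a) * q ^ (m * (j - 1) + r))
    = q ^ ((m + 1) * i.choose 2 + 2 * r * i) * a ^ i *
        ∏ j ∈ Finset.Icc 1 i, qint q (m * j) * (1 - q ^ (j - 1) * (1 - q) * a) := by
  induction i with
  | zero => simp
  | succ k ih =>
    rw [Finset.prod_Icc_succ_top (by omega), Finset.prod_Icc_succ_top (by omega), ih, key_term]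
    rw [show (k + 1).choose 2 = k.choose 2 + k from by
      rw [Nat.choose_succ_succ]; simp [Nat.choose_one_right, Nat.add_comm]]
    rw [show (m + 1) * (k.choose 2 + k) + 2 * r * (k + 1)
        = ((m + 1) * k.choose 2 + 2 * r * k) + ((m + 1) * k + 2 * r) from by ring]
    rw [pow_add, pow_succ]
    ring

/-- with
`c(i) = ((q^(mi) - 1) q^r q^(2i-2) a^2 + q^r [m]_q [i]_{q^m} q^(i-1) a) q^(m(i-1)+r)`,
the double product `Π_{i=0}^{n-1} Π_{j=1}^{i} c(j)` equals
`q^(2r·C(n,2) + (m+1)·C(n,3)) a^(C(n,2)) Π_{i=0}^{n-1} Π_{j=1}^{i} [mj]_q (1 - q^(j-1)(1-q)a)`. -/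
theorem hankel_product_formula {K : Type*} [Field K] (q a : K) (hq0 : q ≠ 0) (hq1 : q ≠ 1)
    (m r : ℕ) (hm : 1 ≤ m) (n : ℕ) :
    (∏ i ∈ Finset.range n, ∏ j ∈ Finset.Icc 1 i,
        ((q ^ (m * j) - 1) * q ^ r * q ^ (2 * j - 2) * a ^ 2
          + q ^ r * qint q m * qint (q ^ m) j * q ^ (j - 1) * a) * q ^ (m * (j - 1) + r))
      = q ^ (2 * r * n.choose 2 + (m + 1) * n.choose 3) * a ^ n.choose 2 *
          ∏ i ∈ Finset.range n, ∏ j ∈ Finset.Icc 1 i,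
            qint q (m * j) * (1 - q ^ (j - 1) * (1 - q) * a) := by
  induction n with
  | zero => simp
  | succ k ih =>
    rw [Finset.prod_range_succ, Finset.prod_range_succ, ih, inner_prod]
    rw [show (k + 1).choose 2 = k.choose 2 + k from by
      rw [Nat.choose_succ_succ]; simp [Nat.choose_one_right, Nat.add_comm]]
    rw [show (k + 1).choose 3 = k.choose 3 + k.choose 2 from by
      rw [Nat.choose_succ_succ]; ring]
    rw [show 2 * r * (k.choose 2 + k) + (m + 1) * (k.choose 3 + k.choose 2)
        = (2 * r * k.choose 2 + (m + 1) * k.choose 3) + ((m + 1) * k.choose 2 + 2 * r * k)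
          from by ring]
    rw [pow_add, pow_add]
    ring
end

section
/- For m = 1, the Hankel determinant of (Φ_n[a,r,1]_q)_{n≥0} equals q^{2r·C(n,2) + 2·C(n,3)} a^{C(n,2)} Π_{i=0}^{n-1} [i]_q! ((1-q)a; q)_i, where ((1-q)a; q)_i = Π_{j=0}^{i-1} (1 - q^j (1-q) a) is the q-Pochhammer symbol and [i]_q! = Π_{j=1}^i [j]_q. -/
/-- The q-analogue of the r-Whitney numbers of the second kind, defined by
`W[0,0] = 1`, vanishing outside `0 ≤ k ≤ n`, and the triangular recurrence. -/
def W {K : Type*} [CommRing K] (q : K) (m r : ℕ) : ℕ → ℕ → K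
  | 0, 0 => 1
  | 0, _ + 1 => 0
  | n + 1, 0 => qint q r * W q m r n 0
  | n + 1, k + 1 => q ^ (m * k + r) * W q m r n k + qint q (m * (k + 1) + r) * W q m r n (k + 1)

/-- `Φ_n[a,r,m]_q = Σ_{k=0}^n W_{m,r}[n,k]_q a^k`. -/
def PhiEval {K : Type*} [Field K] (q : K) (m r : ℕ) (a : K) (n : ℕ) : K :=
  ∑ k ∈ Finset.range (n + 1), W q m r n k * a ^ k

namespace HankelAux

variable {K : Type*} [Field K]

/-- Gaussian binomial coefficient, via the q-Pascal recurrence. -/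
def qb (q : K) : ℕ → ℕ → K
  | 0, 0 => 1
  | 0, _ + 1 => 0
  | _ + 1, 0 => 1
  | n + 1, k + 1 => qb q n k + q ^ (k + 1) * qb q n (k + 1)

lemma qb_succ_succ (q : K) (n k : ℕ) :
    qb q (n + 1) (k + 1) = qb q n k + q ^ (k + 1) * qb q n (k + 1) := rfl

lemma qb_zero_right (q : K) (n : ℕ) : qb q n 0 = 1 := by cases n <;> rfl

lemma qb_eq_zero (q : K) : ∀ (n k : ℕ), n < k → qb q n k = 0 := by
  intro n
  induction n with
  | zero => intro k hk; cases k with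
      | zero => omega
      | succ k => rfl
  | succ n ih =>
      intro k hk
      cases k with
      | zero => omega
      | succ k =>
          rw [qb_succ_succ, ih k (by omega), ih (k+1) (by omega)]
          ring

lemma qb_diag (q : K) : ∀ n, qb q n n = 1
  | 0 => rfl
  | n + 1 => by
      rw [qb_succ_succ, qb_diag q n, qb_eq_zero q n (n+1) (by omega)]
      ring

lemma qint_add (q : K) (m n : ℕ) : qint q (m + n) = qint q m + q ^ m * qint q n := by
  unfold qint
  rw [Finset.sum_range_add, Finset.mul_sum]
  congr 1
  exact Finset.sum_congr rfl fun i _ => by rw [pow_add]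

lemma qint_one (q : K) : qint q 1 = 1 := by simp [qint]

lemma qint_zero (q : K) : qint q 0 = 0 := by simp [qint]

lemma qint_geom (q : K) (m : ℕ) : (1 - q) * qint q m = 1 - q ^ m := by
  have h := geom_sum_mul q m
  unfold qint
  linear_combination (-1 : K) * h

lemma qb_one (q : K) : ∀ n, qb q n 1 = qint q n
  | 0 => by simp [qb, qint_zero]
  | n + 1 => by
      rw [qb_succ_succ, qb_zero_right, qb_one q n]
      have : (1 : ℕ) + n = n + 1 := by omega
      rw [← this, qint_add, qint_one]

/-- absorption identity for Gaussian binomials -/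
lemma qb_abs (q : K) : ∀ (n k : ℕ), (1 - q ^ (k + 1)) * qb q n (k + 1)
    = (1 - q ^ (n - k)) * qb q n k := by
  intro n
  induction n with
  | zero =>
      intro k
      have h1 : qb q 0 (k + 1) = 0 := qb_eq_zero q 0 (k+1) (by omega)
      have h2 : (0 : ℕ) - k = 0 := by omega
      rw [h1, h2]
      simp
  | succ n ih =>
      intro k
      cases k with
      | zero =>
          rw [show (0:ℕ)+1 = 1 from rfl, qb_one, qb_zero_right, pow_one, Nat.sub_zero,
            mul_one]
          exact qint_geom q (n+1)
      | succ k =>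
          rcases Nat.lt_or_ge k n with hkn | hkn
          · -- k < n
            obtain ⟨t, ht⟩ := Nat.exists_eq_add_of_le (Nat.succ_le_of_lt hkn)
            have e1 : n - (k + 1) = t := by omega
            have e2 : n - k = t + 1 := by omega
            have e3 : n + 1 - (k + 1) = t + 1 := by omega
            have IH1 := ih (k + 1)
            have IH2 := ih k
            rw [e1] at IH1
            rw [e2] at IH2
            rw [e3, qb_succ_succ, qb_succ_succ]
            linear_combination q^(k+2) * IH1 + IH2
          · -- n ≤ k
            have z3 : qb q (n + 1) (k + 1 + 1) = 0 := qb_eq_zero q (n+1) (k+1+1) (by omega)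
            have e : n + 1 - (k + 1) = 0 := by omega
            rw [e, z3]
            simp

variable (q a : K) (r : ℕ)

/-- connection coefficients -/
def cc (j k : ℕ) : K := qb q j k * a ^ (j - k)

/-- diagonal recurrence coefficient `b_k` -/
def bb (k : ℕ) : K := qint q (k + r) + a * q ^ (2 * k + r) + a * q ^ (k + r - 1) * (q ^ k - 1)

/-- super-diagonal recurrence coefficient `γ_k` -/
def gg (k : ℕ) : K := q ^ (k + r) * a * qint q (k + 1) * (1 - q ^ k * (1 - q) * a)

/-- sub-diagonal recurrence coefficient `α_k` -/
def alp : ℕ → K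
  | 0 => 0
  | k + 1 => q ^ (k + r)

/-- the triangular change-of-basis matrix -/
def EE (n k : ℕ) : K := ∑ j ∈ Finset.range (n + 1), W q 1 r n j * cc q a j k

/-- the "norms" `h_k = a^k [k]_q! ((1-q)a; q)_k` -/
def hh (k : ℕ) : K :=
  a ^ k * (∏ j ∈ Finset.Icc 1 k, qint q j) * ∏ j ∈ Finset.range k, (1 - q ^ j * (1 - q) * a)

/-- key scalar identity -/
lemma dagger (hq1 : q ≠ 1) (j k : ℕ) :
    q ^ (j + r) * cc q a (j + 1) k + qint q (j + r) * cc q a j k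
      = alp q r k * cc q a j (k - 1) + bb q a r k * cc q a j k
        + gg q a r k * cc q a j (k + 1) := by
  have h1q : (1 : K) - q ≠ 0 := sub_ne_zero_of_ne (Ne.symm hq1)
  cases k with
  | zero =>
      -- k = 0
      simp only [cc, bb, gg, alp, qb_zero_right, Nat.sub_zero, zero_mul, zero_add]
      cases j with
      | zero =>
          simp [qb_eq_zero q 0 1 (by omega), qint_zero]
          ring
      | succ s =>
          rw [qb_one]
          have hqj := qint_geom q (s + 1)
          have hadd : qint q (s + 1 + r) = qint q r + q ^ r * qint q (s + 1) := by
            rw [show s + 1 + r = r + (s + 1) from by omega, qint_add]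
          rw [hadd]
          have e1 : s + 1 - 1 = s := by omega
          rw [e1, qint_one]
          linear_combination (q ^ r * a ^ (s + 2)) * hqj
  | succ k =>
      rcases Nat.lt_or_ge j (k + 1) with hj | hj
      · -- j ≤ k : everything (except possibly j = k diag) vanishes
        rcases Nat.lt_or_ge j k with hjk | hjk
        · have z1 : qb q j (k + 1) = 0 := qb_eq_zero q _ _ (by omega)
          have z2 : qb q j (k + 2) = 0 := qb_eq_zero q _ _ (by omega)
          have z3 : qb q (j + 1) (k + 1) = 0 := qb_eq_zero q _ _ (by omega)
          have z4 : qb q j k = 0 := qb_eq_zero q _ _ (by omega)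
          simp only [cc, alp, z1, z2, z3, z4, show k + 1 - 1 = k from rfl]
          ring
        · have hjk' : j = k := by omega
          subst hjk'
          have z1 : qb q j (j + 1) = 0 := qb_eq_zero q _ _ (by omega)
          have z2 : qb q j (j + 2) = 0 := qb_eq_zero q _ _ (by omega)
          simp only [cc, alp, z1, z2, qb_diag,
            show j + 1 - (j + 1) = 0 from by omega, show j + 1 - 1 = j from by omega,
            show j - j = 0 from by omega]
          ring
      · obtain ⟨m, hm⟩ := Nat.exists_eq_add_of_le hj
        subst hm
        apply mul_left_cancel₀ h1q
        cases m with
        | zero =>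
            -- j = k + 1
            simp only [Nat.add_zero] at *
            have e1 : qb q (k + 1 + 1) (k + 1) = qb q (k + 1) k + q ^ (k + 1) * qb q (k + 1) (k + 1) :=
              qb_succ_succ q (k + 1) k
            have e3 := qb_abs q (k + 1) k
            rw [show k + 1 - k = 1 from by omega] at e3
            have z2 : qb q (k + 1) (k + 2) = 0 := qb_eq_zero q _ _ (by omega)
            simp only [cc, bb, gg, alp, z2, show k + 1 - 1 = k from rfl,
              show k + 1 + 1 - (k + 1) = 1 from by omega,
              show k + 1 - (k + 1) = 0 from by omega,
              show k + 1 - k = 1 from by omega,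
              show k + 1 - (k + 2) = 0 from by omega,
              show k + 1 + r - 1 = k + r from by omega]
            rw [show k + 1 + r = k + 1 + r from rfl]
            linear_combination ((1 - q) * q ^ (k + 1 + r) * a) * e1
              + ((1 - q) * q ^ (k + r) * a) * e3
        | succ s =>
            -- j = k + 1 + (s + 1) = k + s + 2
            have hj2 : k + 1 + (s + 1) = k + s + 2 := by omega
            rw [hj2]
            have e1 : qb q (k + s + 2 + 1) (k + 1)
                = qb q (k + s + 2) k + q ^ (k + 1) * qb q (k + s + 2) (k + 1) := by
              rw [show k + s + 2 + 1 = (k + s + 2) + 1 from rfl]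
              exact qb_succ_succ q (k + s + 2) k
            have e2 := qb_abs q (k + s + 2) (k + 1)
            rw [show k + s + 2 - (k + 1) = s + 1 from by omega] at e2
            have e3 := qb_abs q (k + s + 2) k
            rw [show k + s + 2 - k = s + 2 from by omega] at e3
            have hm := qint_geom q (s + 1)
            have hk2 := qint_geom q (k + 2)
            have hadd : qint q (k + s + 2 + r) = qint q (k + 1 + r) + q ^ (k + 1 + r) * qint q (s + 1) := by
              rw [show k + s + 2 + r = (k + 1 + r) + (s + 1) from by omega, qint_add]
            simp only [cc, bb, gg, alp, show k + 1 - 1 = k from rfl,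
              show k + s + 2 + 1 - (k + 1) = s + 2 from by omega,
              show k + s + 2 - (k + 1) = s + 1 from by omega,
              show k + s + 2 - k = s + 2 from by omega,
              show k + s + 2 - (k + 2) = s from by omega,
              show k + 1 + r - 1 = k + r from by omega]
            rw [hadd]
            linear_combination ((1 - q) * q ^ (k + s + 2 + r) * a ^ (s + 2)) * e1
              + (-(q ^ (k + 1 + r) * a ^ (s + 1) * (1 - q ^ (k + 1) * (1 - q) * a))) * e2
              + ((1 - q) * q ^ (k + r) * a ^ (s + 2)) * e3
              + (q ^ (k + 1 + r) * qb q (k + s + 2) (k + 1) * a ^ (s + 1)) * hm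
              + (-(q ^ (k + 1 + r) * a ^ (s + 1) * (1 - q ^ (k + 1) * (1 - q) * a)
                  * qb q (k + s + 2) (k + 2))) * hk2

lemma W1_succ_succ (n k : ℕ) : W q 1 r (n + 1) (k + 1)
    = q ^ (k + r) * W q 1 r n k + qint q (k + 1 + r) * W q 1 r n (k + 1) := by
  have h : W q 1 r (n + 1) (k + 1)
      = q ^ (1 * k + r) * W q 1 r n k + qint q (1 * (k + 1) + r) * W q 1 r n (k + 1) := rfl
  rw [h, one_mul, one_mul]

lemma W_eq_zero : ∀ (n k : ℕ), n < k → W q 1 r n k = 0 := by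
  intro n
  induction n with
  | zero => intro k hk; cases k with
      | zero => omega
      | succ k => rfl
  | succ n ih =>
      intro k hk
      cases k with
      | zero => omega
      | succ k =>
          rw [W1_succ_succ, ih k (by omega), ih (k+1) (by omega)]
          ring

lemma W_diag : ∀ n : ℕ, W q 1 r n n = q ^ (r * n + n.choose 2)
  | 0 => by
      rw [show W q 1 r 0 0 = (1 : K) from rfl]
      norm_num
  | n + 1 => by
      rw [W1_succ_succ, W_eq_zero q r n (n+1) (by omega), W_diag n, mul_zero, add_zero,
        ← pow_add]
      congr 1
      have h2 : (n+1).choose 2 = n.choose 1 + n.choose 2 := Nat.choose_succ_succ n 1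
      rw [Nat.choose_one_right] at h2
      rw [h2, Nat.mul_succ]
      omega

lemma EE_vanish (i k : ℕ) (h : i < k) : EE q a r i k = 0 := by
  refine Finset.sum_eq_zero fun j hj => ?_
  rw [Finset.mem_range] at hj
  rw [cc, qb_eq_zero q j k (by omega), zero_mul, mul_zero]

lemma EE_diag (i : ℕ) : EE q a r i i = W q 1 r i i := by
  unfold EE
  rw [Finset.sum_range_succ, Finset.sum_eq_zero, cc, qb_diag, Nat.sub_self, pow_zero,
    zero_add]
  · ring
  · intro j hj
    rw [Finset.mem_range] at hj
    rw [cc, qb_eq_zero q j i (by omega), zero_mul, mul_zero]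

lemma EE_phi (n : ℕ) : EE q a r n 0 = PhiEval q 1 r a n := by
  unfold EE PhiEval cc
  exact Finset.sum_congr rfl fun j _ => by rw [qb_zero_right, Nat.sub_zero, one_mul]

lemma EE_zero0 : EE q a r 0 0 = 1 := by
  unfold EE
  rw [Finset.sum_range_one, cc, show W q 1 r 0 0 = (1:K) from rfl,
    show qb q 0 0 = (1:K) from rfl]
  norm_num

lemma hh_zero : hh q a 0 = 1 := by
  unfold hh
  rw [Finset.Icc_eq_empty (by omega)]
  simp

lemma hGamma (k : ℕ) : q ^ (k + r) * hh q a (k + 1) = gg q a r k * hh q a k := by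
  unfold hh gg
  rw [Finset.prod_Icc_succ_top (by omega), Finset.prod_range_succ]
  ring

lemma E_rec (hq1 : q ≠ 1) (n k : ℕ) :
    EE q a r (n + 1) k
      = alp q r k * EE q a r n (k - 1) + bb q a r k * EE q a r n k
        + gg q a r k * EE q a r n (k + 1) := by
  unfold EE
  rw [Finset.sum_range_succ']
  have step1 : ∀ j ∈ Finset.range (n+1), W q 1 r (n+1) (j+1) * cc q a (j+1) k
      = q ^ (j+r) * (W q 1 r n j * cc q a (j+1) k)
        + qint q (j+1+r) * (W q 1 r n (j+1) * cc q a (j+1) k) := by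
    intro j _; rw [W1_succ_succ]; ring
  rw [Finset.sum_congr rfl step1, Finset.sum_add_distrib, add_assoc]
  have step2 : (∑ j ∈ Finset.range (n+1),
        qint q (j+1+r) * (W q 1 r n (j+1) * cc q a (j+1) k))
      + W q 1 r (n+1) 0 * cc q a 0 k
      = ∑ j ∈ Finset.range (n+1), qint q (j+r) * (W q 1 r n j * cc q a j k) := by
    have h0 : W q 1 r (n+1) 0 * cc q a 0 k
        = qint q (0+r) * (W q 1 r n 0 * cc q a 0 k) := by
      rw [show W q 1 r (n+1) 0 = qint q r * W q 1 r n 0 from rfl, Nat.zero_add]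
      ring
    rw [h0,
      ← Finset.sum_range_succ' (fun j => qint q (j+r) * (W q 1 r n j * cc q a j k)) (n+1),
      Finset.sum_range_succ, W_eq_zero q r n (n+1) (by omega)]
    ring
  rw [step2, ← Finset.sum_add_distrib]
  have step3 : ∀ j ∈ Finset.range (n+1),
      q ^ (j+r) * (W q 1 r n j * cc q a (j+1) k)
        + qint q (j+r) * (W q 1 r n j * cc q a j k)
      = alp q r k * (W q 1 r n j * cc q a j (k-1))
        + bb q a r k * (W q 1 r n j * cc q a j k)
        + gg q a r k * (W q 1 r n j * cc q a j (k+1)) := by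
    intro j _
    have hd := dagger q a r hq1 j k
    linear_combination (W q 1 r n j) * hd
  rw [Finset.sum_congr rfl step3, Finset.sum_add_distrib, Finset.sum_add_distrib,
    ← Finset.mul_sum, ← Finset.mul_sum, ← Finset.mul_sum]

lemma cross (hq1 : q ≠ 1) (M x y : ℕ) (hy : y ≤ M) :
    ∑ k ∈ Finset.range (M+1), alp q r k * (EE q a r x (k-1) * EE q a r y k * hh q a k)
      = ∑ k ∈ Finset.range (M+1),
          gg q a r k * (EE q a r y (k+1) * EE q a r x k * hh q a k) := by
  rw [Finset.sum_range_succ'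
    (fun k => alp q r k * (EE q a r x (k-1) * EE q a r y k * hh q a k)) M]
  rw [Finset.sum_range_succ
    (fun k => gg q a r k * (EE q a r y (k+1) * EE q a r x k * hh q a k)) M]
  rw [EE_vanish q a r y (M+1) (by omega)]
  have h0 : alp q r 0 * (EE q a r x (0-1) * EE q a r y 0 * hh q a 0) = 0 := by
    rw [show alp q r 0 = (0:K) from rfl]; ring
  rw [h0, add_zero]
  have : ∀ k ∈ Finset.range M,
      alp q r (k+1) * (EE q a r x (k+1-1) * EE q a r y (k+1) * hh q a (k+1))
        = gg q a r k * (EE q a r y (k+1) * EE q a r x k * hh q a k) := by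
    intro k _
    rw [show alp q r (k+1) = q ^ (k+r) from rfl, show k+1-1 = k from rfl]
    have hg := hGamma q a r k
    linear_combination (EE q a r x k * EE q a r y (k+1)) * hg
  rw [Finset.sum_congr rfl this]
  ring

lemma shift (hq1 : q ≠ 1) (i j : ℕ) :
    ∑ k ∈ Finset.range (i+j+3), EE q a r (i+1) k * EE q a r j k * hh q a k
      = ∑ k ∈ Finset.range (i+j+3), EE q a r i k * EE q a r (j+1) k * hh q a k := by
  have expand : ∀ x y : ℕ,
      ∑ k ∈ Finset.range (i+j+3), EE q a r (x+1) k * EE q a r y k * hh q a k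
        = (∑ k ∈ Finset.range (i+j+3),
            alp q r k * (EE q a r x (k-1) * EE q a r y k * hh q a k))
          + (∑ k ∈ Finset.range (i+j+3),
              bb q a r k * (EE q a r x k * EE q a r y k * hh q a k))
          + ∑ k ∈ Finset.range (i+j+3),
              gg q a r k * (EE q a r x (k+1) * EE q a r y k * hh q a k) := by
    intro x y
    rw [← Finset.sum_add_distrib, ← Finset.sum_add_distrib]
    refine Finset.sum_congr rfl fun k _ => ?_
    rw [E_rec q a r hq1 x k]
    ring
  have comm : ∑ k ∈ Finset.range (i+j+3), EE q a r i k * EE q a r (j+1) k * hh q a k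
      = ∑ k ∈ Finset.range (i+j+3), EE q a r (j+1) k * EE q a r i k * hh q a k :=
    Finset.sum_congr rfl fun k _ => by ring
  rw [expand i j, comm, expand j i,
    show i+j+3 = (i+j+2)+1 from rfl,
    cross q a r hq1 (i+j+2) i j (by omega),
    cross q a r hq1 (i+j+2) j i (by omega)]
  have hbb : ∑ k ∈ Finset.range (i+j+2+1),
      bb q a r k * (EE q a r i k * EE q a r j k * hh q a k)
      = ∑ k ∈ Finset.range (i+j+2+1),
          bb q a r k * (EE q a r j k * EE q a r i k * hh q a k) :=
    Finset.sum_congr rfl fun k _ => by ring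
  rw [hbb]
  ring

lemma main (hq1 : q ≠ 1) : ∀ i j : ℕ,
    ∑ k ∈ Finset.range (i+j+2), EE q a r i k * EE q a r j k * hh q a k
      = PhiEval q 1 r a (i+j) := by
  intro i
  induction i with
  | zero =>
      intro j
      rw [show (0:ℕ)+j+2 = (j+1)+1 from by omega,
        Finset.sum_range_succ' (fun k => EE q a r 0 k * EE q a r j k * hh q a k) (j+1)]
      have hz : ∀ k ∈ Finset.range (j+1),
          EE q a r 0 (k+1) * EE q a r j (k+1) * hh q a (k+1) = 0 := by
        intro k _
        rw [EE_vanish q a r 0 (k+1) (by omega)]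
        ring
      rw [Finset.sum_eq_zero hz, EE_zero0, EE_phi, hh_zero, show (0:ℕ)+j = j from by omega]
      ring
  | succ i ih =>
      intro j
      rw [show i+1+j+2 = i+j+3 from by omega, shift q a r hq1 i j,
        show i+j+3 = i+(j+1)+2 from by omega, ih (j+1),
        show i+(j+1) = i+1+j from by omega]

lemma sum_ext (i j N M : ℕ) (hN : i < N) (hM : i < M) :
    ∑ k ∈ Finset.range N, EE q a r i k * EE q a r j k * hh q a k
      = ∑ k ∈ Finset.range M, EE q a r i k * EE q a r j k * hh q a k := by
  have ext : ∀ N M : ℕ, N ≤ M → i < N →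
      ∑ k ∈ Finset.range N, EE q a r i k * EE q a r j k * hh q a k
        = ∑ k ∈ Finset.range M, EE q a r i k * EE q a r j k * hh q a k := by
    intro N M h hN
    refine Finset.sum_subset (Finset.range_subset_range.mpr h) fun k _ hk => ?_
    rw [Finset.mem_range] at hk
    rw [EE_vanish q a r i k (by omega)]
    ring
  rcases le_total N M with h | h
  · exact ext N M h hN
  · exact (ext M N h hM).symm

lemma nat_sum_id (n : ℕ) : ∑ i ∈ Finset.range n, i = n.choose 2 := by
  induction n with
  | zero => rfl
  | succ n ih =>
      rw [Finset.sum_range_succ, ih]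
      have h2 : (n+1).choose 2 = n.choose 1 + n.choose 2 := Nat.choose_succ_succ n 1
      rw [Nat.choose_one_right] at h2
      omega

lemma nat_sum_exp (n r : ℕ) :
    ∑ i ∈ Finset.range n, (r * i + i.choose 2) = r * n.choose 2 + n.choose 3 := by
  induction n with
  | zero => rfl
  | succ n ih =>
      rw [Finset.sum_range_succ, ih]
      have h2 : (n+1).choose 2 = n.choose 1 + n.choose 2 := Nat.choose_succ_succ n 1
      have h3 : (n+1).choose 3 = n.choose 2 + n.choose 3 := Nat.choose_succ_succ n 2
      rw [Nat.choose_one_right] at h2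
      rw [h2, h3]
      ring

end HankelAux

/-- for `m = 1`, the Hankel determinant of `(Φ_n[a,r,1]_q)` equals
`q^(2r·C(n,2) + 2·C(n,3)) a^(C(n,2)) Π_{i=0}^{n-1} [i]_q! ((1-q)a; q)_i`. -/
theorem hankel_transform_Phi_m_one {K : Type*} [Field K] (q a : K) (hq0 : q ≠ 0)
    (hq1 : q ≠ 1) (r : ℕ) (n : ℕ) :
    Matrix.det (Matrix.of fun i j : Fin n => PhiEval q 1 r a (i.1 + j.1))
      = q ^ (2 * r * n.choose 2 + 2 * n.choose 3) * a ^ n.choose 2 *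
          ∏ i ∈ Finset.range n,
            (∏ j ∈ Finset.Icc 1 i, qint q j) *
              ∏ j ∈ Finset.range i, (1 - q ^ j * (1 - q) * a) := by
  classical
  set A : Matrix (Fin n) (Fin n) K := Matrix.of (fun i k : Fin n => HankelAux.EE q a r i.1 k.1) with hA
  set D : Matrix (Fin n) (Fin n) K := Matrix.diagonal (fun k : Fin n => HankelAux.hh q a k.1) with hD
  have hfact : (Matrix.of fun i j : Fin n => PhiEval q 1 r a (i.1 + j.1)) = A * D * A.transpose := by
    ext i j
    have h1 : (A * D * A.transpose) i j
        = ∑ k : Fin n, HankelAux.EE q a r i.1 k.1 * HankelAux.EE q a r j.1 k.1 * HankelAux.hh q a k.1 := by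
      rw [Matrix.mul_apply]
      refine Finset.sum_congr rfl fun k _ => ?_
      rw [Matrix.mul_diagonal, Matrix.transpose_apply, hA]
      simp only [Matrix.of_apply]
      ring
    rw [Matrix.of_apply, h1,
      Fin.sum_univ_eq_sum_range (fun k => HankelAux.EE q a r i.1 k * HankelAux.EE q a r j.1 k * HankelAux.hh q a k) n,
      HankelAux.sum_ext q a r i.1 j.1 n (i.1 + j.1 + 2) i.isLt (by omega),
      HankelAux.main q a r hq1 i.1 j.1]
  rw [hfact, Matrix.det_mul, Matrix.det_mul, Matrix.det_transpose, hD,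
    Matrix.det_diagonal]
  have hdetA : A.det = q ^ (r * n.choose 2 + n.choose 3) := by
    have htri : A.BlockTriangular OrderDual.toDual := by
      intro i j hij
      rw [hA]
      simp only [Matrix.of_apply]
      exact HankelAux.EE_vanish q a r i.1 j.1 (by exact_mod_cast hij)
    rw [Matrix.det_of_lowerTriangular A htri]
    have h1 : ∀ i : Fin n, A i i = q ^ (r * i.1 + (i.1).choose 2) := by
      intro i
      rw [hA]
      simp only [Matrix.of_apply]
      rw [HankelAux.EE_diag, HankelAux.W_diag]
    rw [Finset.prod_congr rfl fun i _ => h1 i, Finset.prod_pow_eq_pow_sum,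
      Fin.sum_univ_eq_sum_range (fun i => r * i + i.choose 2) n, HankelAux.nat_sum_exp]
  have hdetD : ∏ k : Fin n, HankelAux.hh q a k.1
      = a ^ n.choose 2 * ∏ i ∈ Finset.range n,
          ((∏ j ∈ Finset.Icc 1 i, qint q j)
            * ∏ j ∈ Finset.range i, (1 - q ^ j * (1 - q) * a)) := by
    rw [Fin.prod_univ_eq_prod_range (fun k => HankelAux.hh q a k) n]
    unfold HankelAux.hh
    rw [Finset.prod_congr rfl fun i _ => mul_assoc (a ^ i) _ _, Finset.prod_mul_distrib,
      Finset.prod_pow_eq_pow_sum, HankelAux.nat_sum_id]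
  rw [hdetA, hdetD]
  have hqq : (q ^ (r * n.choose 2 + n.choose 3)) * (q ^ (r * n.choose 2 + n.choose 3))
      = q ^ (2 * r * n.choose 2 + 2 * n.choose 3) := by
    rw [← pow_add]
    congr 1
    ring
  calc q ^ (r * n.choose 2 + n.choose 3)
        * (a ^ n.choose 2 * ∏ i ∈ Finset.range n,
            ((∏ j ∈ Finset.Icc 1 i, qint q j)
              * ∏ j ∈ Finset.range i, (1 - q ^ j * (1 - q) * a)))
        * q ^ (r * n.choose 2 + n.choose 3)
      = (q ^ (r * n.choose 2 + n.choose 3) * q ^ (r * n.choose 2 + n.choose 3))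
          * a ^ n.choose 2 * ∏ i ∈ Finset.range n,
            ((∏ j ∈ Finset.Icc 1 i, qint q j)
              * ∏ j ∈ Finset.range i, (1 - q ^ j * (1 - q) * a)) := by ring
    _ = _ := by rw [hqq]
end
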